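/- Fix ω > 0 and η > 0 and let t* > 5/4 be the unique solution of (t* − 5/4) e^{t*} = 4η/ω, and set u = t* − 5/4 > 0. Then the maximum value of the Shiha hazard rate equals h(t*/ω; ω, η) = ω (2u + 1)/(u + 1). -/

import Mathlib

open Real

noncomputable def shihaHazard (ω η y : ℝ) : ℝ :=
  ω * (ω + (2 * η + 8 * ω * η * y) * Real.exp (-ω * y))
    / (ω + (3 * η + 4 * ω * η * y) * Real.exp (-ω * y))

theorem shiha_hazard_max_value (ω η tstar : ℝ) (hω : 0 < ω) (hη : 0 < η)
    (ht : 5 / 4 < tstar) (heq : (tstar - 5 / 4) * Real.exp tstar = 4 * η / ω) :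
    shihaHazard ω η (tstar / ω)
      = ω * (2 * (tstar - 5 / 4) + 1) / ((tstar - 5 / 4) + 1) := by
  have hu : 0 < tstar - 5 / 4 := by linarith
  have hE : 0 < Real.exp tstar := Real.exp_pos _
  have hω' : ω ≠ 0 := ne_of_gt hω
  have hη' : η = ω * (tstar - 5 / 4) * Real.exp tstar / 4 := by
    field_simp at heq
    nlinarith [heq]
  subst hη'
  unfold shihaHazard
  have hy : -ω * (tstar / ω) = -tstar := by field_simp
  rw [hy, Real.exp_neg]
  have htpos : 0 < tstar := by linarith
  have hden : ω + (3 * (ω * (tstar - 5 / 4) * Real.exp tstar / 4)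
      + 4 * ω * (ω * (tstar - 5 / 4) * Real.exp tstar / 4) * (tstar / ω))
      * (Real.exp tstar)⁻¹ ≠ 0 := by positivity
  have hden2 : (tstar - 5 / 4) + 1 ≠ 0 := by positivity
  rw [div_eq_div_iff hden hden2]
  field_simp
  ring
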